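/- Let Z be a real reflexive Banach space continuously and densely embedded in a real Banach space V, τ > 0, and let R : Z → [0,∞] be proper, convex, lower semicontinuous and positively 1-homogeneous (R(λv) = λ·R(v) for all v ∈ Z, λ > 0). Let I_τ be the indicator functional of {v ∈ Z : ‖v‖_V ≤ τ}. Then for every η ∈ Z* the Fenchel conjugate of R + I_τ satisfies (R + I_τ)*(η) = τ·dist_{V*}(η, ∂R(0)), where dist_{V*}(η, ∂R(0)) := inf{‖η − w‖_{V*} : w ∈ ∂R(0), η − w ∈ V*}, interpreted as +∞ if no w ∈ ∂R(0) with η − w ∈ V* exists. -/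

import Mathlib

open Set Filter

variable {Z V : Type*} [NormedAddCommGroup Z] [NormedSpace ℝ Z]
  [NormedAddCommGroup V] [NormedSpace ℝ V]

/-- `η ∈ Z*` is bounded with respect to the `V`-norm on `Z` (i.e. `η` belongs to `V*`,
identified with a subspace of `Z*` via the dense embedding `ι : Z ↪ V`). -/
def InVdual (ι : Z →L[ℝ] V) (η : Z →L[ℝ] ℝ) : Prop :=
  ∃ C : ℝ, ∀ z : Z, |η z| ≤ C * ‖ι z‖

/-- The `V*`-norm of `η ∈ Z*`: `‖η‖_{V*} = sup{⟨η, v⟩ : v ∈ Z, ‖v‖_V ≤ 1}`. -/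
noncomputable def VdualNorm (ι : Z →L[ℝ] V) (η : Z →L[ℝ] ℝ) : ℝ :=
  sSup {r : ℝ | ∃ z : Z, ‖ι z‖ ≤ 1 ∧ r = η z}

/-- The extended distance `dist_{V*}(η, A) = inf{‖η − w‖_{V*} : w ∈ A, η − w ∈ V*}`,
interpreted as `+∞` (in `EReal`) if no such `w` exists. -/
noncomputable def distVdual (ι : Z →L[ℝ] V) (η : Z →L[ℝ] ℝ) (A : Set (Z →L[ℝ] ℝ)) : EReal :=
  sInf {r : EReal | ∃ w ∈ A, InVdual ι (η - w) ∧ r = ((VdualNorm ι (η - w) : ℝ) : EReal)}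

/-- The indicator functional `I_τ` of `{v ∈ Z : ‖v‖_V ≤ τ}`, with values in `EReal`. -/
noncomputable def indic (ι : Z →L[ℝ] V) (τ : ℝ) (v : Z) : EReal :=
  if ‖ι v‖ ≤ τ then 0 else ⊤

/-- The subdifferential of an extended-real-valued convex functional `f : Z → EReal` at `x`:
`∂f(x) = {η ∈ Z* : f(y) ≥ f(x) + ⟨η, y − x⟩ for all y ∈ Z}`. -/
def subdiffE (f : Z → EReal) (x : Z) : Set (Z →L[ℝ] ℝ) :=
  {η | ∀ y : Z, f x + ((η (y - x) : ℝ) : EReal) ≤ f y}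

/-- The Fenchel conjugate `f*(η) = sup_{x ∈ Z} (⟨η, x⟩ − f(x))`, with values in `EReal`. -/
noncomputable def conjE (f : Z → EReal) (η : Z →L[ℝ] ℝ) : EReal :=
  ⨆ x : Z, ((η x : ℝ) : EReal) - f x

/-- Let `Z` be a real reflexive Banach space continuously and densely embedded in a real
Banach space `V` (via `ι`), `τ > 0`, and let `R : Z → [0,∞]` be proper, convex, lower
semicontinuous and positively 1-homogeneous. Then for every `η ∈ Z*` the Fenchel conjugate
of `R + I_τ` satisfies `(R + I_τ)*(η) = τ · dist_{V*}(η, ∂R(0))`. -/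
theorem stmt7 [CompleteSpace Z] [CompleteSpace V]
    (hreflZ : Function.Surjective ⇑(NormedSpace.inclusionInDoubleDual ℝ Z))
    (ι : Z →L[ℝ] V) (hinj : Function.Injective ι) (hdense : DenseRange ι)
    (τ : ℝ) (hτ : 0 < τ)
    (R : Z → EReal) (hR0 : ∀ v : Z, 0 ≤ R v) (hRproper : ∃ v : Z, R v ≠ ⊤)
    (hRconvex : ∀ x y : Z, ∀ a b : ℝ, 0 ≤ a → 0 ≤ b → a + b = 1 →
      R (a • x + b • y) ≤ (a : EReal) * R x + (b : EReal) * R y)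
    (hRlsc : LowerSemicontinuous R)
    (hRhom : ∀ (v : Z) (l : ℝ), 0 < l → R (l • v) = (l : EReal) * R v)
    (η : Z →L[ℝ] ℝ) :
    conjE (fun v => R v + indic ι τ v) η = (τ : EReal) * distVdual ι η (subdiffE R 0) := by
  classical
  obtain ⟨v₀, hv₀⟩ := hRproper
  have hRbot : ∀ v, R v ≠ ⊥ := fun v h => by simpa [h] using hR0 v
  -- `R 0 = 0`
  have hR0eq : R 0 = 0 := by
    by_contra h
    have hpos : (0 : EReal) < R 0 := (hR0 0).lt_of_ne (Ne.symm h)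
    set ρ := (R v₀).toReal with hρdef
    have hRv₀ : R v₀ = (ρ : EReal) := (EReal.coe_toReal hv₀ (hRbot v₀)).symm
    have hρ0 : 0 ≤ ρ := by
      have h := hR0 v₀; rw [hRv₀] at h; exact_mod_cast h
    obtain ⟨z, hz0, hzR⟩ := exists_between hpos
    have hzbot : z ≠ ⊥ := by intro hb; rw [hb] at hz0; simp at hz0
    have hztop : z ≠ ⊤ := (hzR.trans_le le_top).ne
    set y := z.toReal with hy
    have hzy : z = (y : EReal) := (EReal.coe_toReal hztop hzbot).symm
    have hy0 : 0 < y := by rw [hzy] at hz0; exact_mod_cast hz0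
    have hyR : (y : EReal) < R 0 := hzy ▸ hzR
    have hev := hRlsc 0 (y : EReal) hyR
    rw [Metric.eventually_nhds_iff] at hev
    obtain ⟨ε, hε, hball⟩ := hev
    set l := min (ε / (‖v₀‖ + 1)) (y / (ρ + 1)) with hl
    have hl0 : 0 < l := lt_min (div_pos hε (by positivity)) (div_pos hy0 (by positivity))
    have hdist : dist (l • v₀) 0 < ε := by
      rw [dist_zero_right, norm_smul, Real.norm_eq_abs, abs_of_pos hl0]
      have h1 : l ≤ ε / (‖v₀‖ + 1) := min_le_left _ _
      have h2 : l * ‖v₀‖ ≤ ε / (‖v₀‖ + 1) * ‖v₀‖ :=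
        mul_le_mul_of_nonneg_right h1 (norm_nonneg _)
      have h3 : ε / (‖v₀‖ + 1) * ‖v₀‖ < ε := by
        rw [div_mul_eq_mul_div, div_lt_iff₀ (by positivity)]
        nlinarith [norm_nonneg v₀]
      linarith
    have hlt : (y : EReal) < R (l • v₀) := hball hdist
    rw [hRhom v₀ l hl0, hRv₀, ← EReal.coe_mul, EReal.coe_lt_coe_iff] at hlt
    have h2 : l ≤ y / (ρ + 1) := min_le_right _ _
    have h3 : l * ρ ≤ y / (ρ + 1) * ρ := mul_le_mul_of_nonneg_right h2 hρ0
    have h4 : y / (ρ + 1) * ρ < y := by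
      rw [div_mul_eq_mul_div, div_lt_iff₀ (by positivity)]
      nlinarith
    linarith
  -- subgradients at 0 lie below R
  have hsub0 : ∀ w ∈ subdiffE R 0, ∀ v : Z, ((w v : ℝ) : EReal) ≤ R v := by
    intro w hw v
    have h := hw v
    rw [hR0eq, zero_add, sub_zero] at h
    exact h
  have hmul : ∀ (t : ℝ) {a b : EReal}, 0 ≤ t → a ≤ b → (t : EReal) * a ≤ (t : EReal) * b :=
    fun t _ _ ht h => mul_le_mul_of_nonneg_left h (by exact_mod_cast ht)
  simp only [conjE, distVdual]
  set S : Set EReal :=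
    {r : EReal | ∃ w ∈ subdiffE R 0, InVdual ι (η - w) ∧
      r = ((VdualNorm ι (η - w) : ℝ) : EReal)} with hS
  set c : EReal := ⨆ x : Z, ((η x : ℝ) : EReal) - (R x + indic ι τ x) with hc
  -- positivity of the conjugate
  have hc0 : (0 : EReal) ≤ c := by
    have h0 : ((η 0 : ℝ) : EReal) - (R 0 + indic ι τ 0) = 0 := by
      have hi : indic ι τ 0 = 0 := by simp [indic, hτ.le]
      simp [hR0eq, hi]
    have hle := le_iSup (fun x : Z => ((η x : ℝ) : EReal) - (R x + indic ι τ x)) 0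
    rw [← hc, h0] at hle
    exact hle
  -- easy direction: c ≤ τ * r for every r in S
  have hkeyS : ∀ r ∈ S, c ≤ (τ : EReal) * r := by
    rintro r ⟨w, hw, ⟨C, hC⟩, rfl⟩
    set ρ := VdualNorm ι (η - w) with hρ
    have hbdd : BddAbove {r : ℝ | ∃ z : Z, ‖ι z‖ ≤ 1 ∧ r = (η - w) z} := by
      refine ⟨max C 0, ?_⟩
      rintro r ⟨z, hz, rfl⟩
      calc (η - w) z ≤ |(η - w) z| := le_abs_self _
        _ ≤ C * ‖ι z‖ := hC z
        _ ≤ max C 0 * ‖ι z‖ := mul_le_mul_of_nonneg_right (le_max_left _ _) (norm_nonneg _)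
        _ ≤ max C 0 * 1 := mul_le_mul_of_nonneg_left hz (le_max_right _ _)
        _ = max C 0 := mul_one _
    have hmem0 : (0 : ℝ) ∈ {r : ℝ | ∃ z : Z, ‖ι z‖ ≤ 1 ∧ r = (η - w) z} :=
      ⟨0, by simp, by simp⟩
    have hρ0 : 0 ≤ ρ := by
      have := le_csSup hbdd hmem0
      simpa [hρ, VdualNorm] using this
    have hkey : ∀ v : Z, ‖ι v‖ ≤ τ → (η - w) v ≤ τ * ρ := by
      intro v hv
      have hz : ‖ι (τ⁻¹ • v)‖ ≤ 1 := by
        rw [map_smul, norm_smul, Real.norm_eq_abs, abs_of_pos (inv_pos.2 hτ),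
          inv_mul_le_iff₀ hτ, mul_one]
        exact hv
      have hle : (η - w) (τ⁻¹ • v) ≤ ρ := by
        have := le_csSup hbdd ⟨τ⁻¹ • v, hz, rfl⟩
        simpa [hρ, VdualNorm] using this
      have heq : (η - w) v = τ * ((η - w) (τ⁻¹ • v)) := by
        rw [map_smul, smul_eq_mul, ← mul_assoc, mul_inv_cancel₀ hτ.ne', one_mul]
      rw [heq]
      exact mul_le_mul_of_nonneg_left hle hτ.le
    rw [show (τ : EReal) * ((ρ : ℝ) : EReal) = ((τ * ρ : ℝ) : EReal) from
      (EReal.coe_mul τ ρ).symm, hc]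
    refine iSup_le fun v => ?_
    by_cases hv : ‖ι v‖ ≤ τ
    · have hFv : indic ι τ v = 0 := by simp [indic, hv]
      rw [hFv, add_zero]
      rcases eq_or_ne (R v) ⊤ with hRv | hRv
      · rw [hRv, EReal.sub_top]; exact bot_le
      · have hRr : R v = ((R v).toReal : EReal) := (EReal.coe_toReal hRv (hRbot v)).symm
        rw [hRr, ← EReal.coe_sub, EReal.coe_le_coe_iff]
        have h1 : w v ≤ (R v).toReal := by
          have h := hsub0 w hw v; rw [hRr] at h; exact_mod_cast h
        have h2 : (η - w) v ≤ τ * ρ := hkey v hv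
        have h3 : (η - w) v = η v - w v := by simp
        linarith
    · have hFv : indic ι τ v = ⊤ := by simp [indic, hv]
      rw [hFv, EReal.add_top_of_ne_bot (hRbot v), EReal.sub_top]
      exact bot_le
  have heasy : c ≤ (τ : EReal) * sInf S := by
    have h1 : ((τ⁻¹ : ℝ) : EReal) * c ≤ sInf S := by
      refine le_sInf fun r hr => ?_
      have h2 := hmul τ⁻¹ (inv_nonneg.2 hτ.le) (hkeyS r hr)
      rwa [← mul_assoc, ← EReal.coe_mul, inv_mul_cancel₀ hτ.ne', EReal.coe_one, one_mul] at h2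
    have h3 := hmul τ hτ.le h1
    rwa [← mul_assoc, ← EReal.coe_mul, mul_inv_cancel₀ hτ.ne', EReal.coe_one, one_mul] at h3
  -- hard direction
  have hhard : (τ : EReal) * sInf S ≤ c := by
    rcases eq_or_ne c ⊤ with hctop | hctop
    · rw [hctop]; exact le_top
    have hcbot : c ≠ ⊥ := fun hb => by rw [hb] at hc0; simp at hc0
    set c' := c.toReal with hc'def
    have hcc : c = (c' : EReal) := (EReal.coe_toReal hctop hcbot).symm
    have hc'0 : 0 ≤ c' := by
      have h := hc0; rw [hcc] at h; exact_mod_cast h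
    set q : Z → ℝ := fun v => c' / τ * ‖ι v‖ with hqdef
    have hct : 0 ≤ c' / τ := div_nonneg hc'0 hτ.le
    have hq0 : ∀ v, 0 ≤ q v := fun v => mul_nonneg hct (norm_nonneg _)
    have hqzero : q 0 = 0 := by simp [hqdef]
    have hqtri : ∀ u v, q (u + v) ≤ q u + q v := by
      intro u v
      simp only [hqdef]
      rw [← mul_add]
      refine mul_le_mul_of_nonneg_left ?_ hct
      rw [map_add]; exact norm_add_le _ _
    have hqneg : ∀ v, q (-v) = q v := by intro v; simp [hqdef]
    have hqsmul : ∀ (l : ℝ) (v : Z), 0 ≤ l → q (l • v) = l * q v := by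
      intro l v hl
      simp only [hqdef, map_smul, norm_smul, Real.norm_eq_abs, abs_of_nonneg hl]
      ring
    -- key inequality: η ≤ R + q
    have key1 : ∀ v : Z, R v ≠ ⊤ → η v ≤ (R v).toReal + q v := by
      intro v hv
      rcases eq_or_ne (ι v) 0 with hiv | hiv
      · have hv0 : v = 0 := hinj (by rw [hiv, map_zero])
        rw [hv0, hqzero, map_zero, hR0eq]
        simp
      · have hnv : 0 < ‖ι v‖ := norm_pos_iff.2 hiv
        set l := τ / ‖ι v‖ with hl
        have hl0 : 0 < l := div_pos hτ hnv
        have hterm := le_iSup (fun x : Z => ((η x : ℝ) : EReal) - (R x + indic ι τ x)) (l • v)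
        rw [← hc] at hterm
        have hind : indic ι τ (l • v) = 0 := by
          have hn : ‖ι (l • v)‖ = τ := by
            rw [map_smul, norm_smul, Real.norm_eq_abs, abs_of_pos hl0, hl]
            field_simp
          simp only [indic]
          rw [if_pos (le_of_eq hn)]
        have hRl : R (l • v) = ((l * (R v).toReal : ℝ) : EReal) := by
          rw [hRhom v l hl0, EReal.coe_mul]
          congr 1
          exact (EReal.coe_toReal hv (hRbot v)).symm
        simp only [hind, add_zero, hRl, map_smul, smul_eq_mul] at hterm
        rw [hcc, ← EReal.coe_sub, EReal.coe_le_coe_iff] at hterm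
        have hlq : l * q v = c' := by
          rw [hqdef, hl]
          field_simp
        have h2 : l * η v ≤ l * ((R v).toReal + q v) := by
          rw [mul_add, hlq]; linarith
        exact le_of_mul_le_mul_left h2 hl0
    -- the inf-convolution N = R □ (q + η)
    set A : Z → Set ℝ := fun v =>
      {x : ℝ | ∃ a : Z, R a ≠ ⊤ ∧ x = (R a).toReal + q (v - a) + η (v - a)} with hA
    have hAne : ∀ v, (A v).Nonempty := fun v => ⟨_, v₀, hv₀, rfl⟩
    have hAlb : ∀ v, ∀ x ∈ A v, η v - q v ≤ x := by
      rintro v x ⟨a, ha, rfl⟩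
      have h1 : η a ≤ (R a).toReal + q a := key1 a ha
      have h2 : q a ≤ q (v - a) + q v := by
        have h3 := hqtri (a - v) v
        rw [sub_add_cancel] at h3
        have h4 : q (a - v) = q (v - a) := by rw [← hqneg (a - v), neg_sub]
        linarith
      have h3 : η (v - a) = η v - η a := by rw [map_sub]
      linarith
    have hAbdd : ∀ v, BddBelow (A v) := fun v => ⟨_, hAlb v⟩
    set N : Z → ℝ := fun v => sInf (A v) with hN
    have hNle : ∀ v, ∀ x ∈ A v, N v ≤ x := fun v x hx => csInf_le (hAbdd v) hx
    have hNlb : ∀ v, η v - q v ≤ N v := fun v => le_csInf (hAne v) (hAlb v)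
    -- subadditivity of R
    have hRsub : ∀ a b : Z, R (a + b) ≤ R a + R b := by
      intro a b
      have hconv := hRconvex a b (1/2) (1/2) (by norm_num) (by norm_num) (by norm_num)
      have hsum : (2 : ℝ) • ((1/2 : ℝ) • a + (1/2 : ℝ) • b) = a + b := by
        rw [smul_add, smul_smul, smul_smul]; norm_num
      have hh := hRhom ((1/2 : ℝ) • a + (1/2 : ℝ) • b) 2 (by norm_num)
      rw [hsum] at hh
      rw [hh]
      calc ((2 : ℝ) : EReal) * R ((1/2 : ℝ) • a + (1/2 : ℝ) • b)
          ≤ ((2 : ℝ) : EReal) * (((1/2 : ℝ) : EReal) * R a + ((1/2 : ℝ) : EReal) * R b) := by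
            refine hmul 2 (by norm_num) ?_
            exact_mod_cast hconv
        _ = ((2 : ℝ) : EReal) * (((1/2 : ℝ) : EReal) * R a)
            + ((2 : ℝ) : EReal) * (((1/2 : ℝ) : EReal) * R b) :=
            EReal.left_distrib_of_nonneg
              (mul_nonneg (by norm_num) (hR0 a)) (mul_nonneg (by norm_num) (hR0 b))
        _ = R a + R b := by
            rw [← mul_assoc, ← mul_assoc, ← EReal.coe_mul]
            norm_num
    have hNadd : ∀ u v, N (u + v) ≤ N u + N v := by
      intro u v
      refine le_of_forall_pos_le_add fun ε hε => ?_
      obtain ⟨x, hxA, hx⟩ := exists_lt_of_csInf_lt (hAne u)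
        (show sInf (A u) < N u + ε/2 by rw [hN]; dsimp only; linarith [half_pos hε])
      obtain ⟨y, hyA, hy⟩ := exists_lt_of_csInf_lt (hAne v)
        (show sInf (A v) < N v + ε/2 by rw [hN]; dsimp only; linarith [half_pos hε])
      obtain ⟨a, haT, hxe⟩ := hxA
      obtain ⟨b, hbT, hye⟩ := hyA
      have habT : R (a + b) ≠ ⊤ := by
        intro h
        have hle := hRsub a b
        rw [h] at hle
        have h2 : (⊤ : EReal) ≤ ↑((R a).toReal + (R b).toReal) := by
          rw [EReal.coe_add, EReal.coe_toReal haT (hRbot a), EReal.coe_toReal hbT (hRbot b)]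
          exact hle
        exact EReal.coe_ne_top _ (top_le_iff.1 h2)
      have hRab : (R (a + b)).toReal ≤ (R a).toReal + (R b).toReal := by
        have h := hRsub a b
        rw [← EReal.coe_toReal haT (hRbot a), ← EReal.coe_toReal hbT (hRbot b),
          ← EReal.coe_add] at h
        have h2 := EReal.toReal_le_toReal h (hRbot (a + b)) (EReal.coe_ne_top _)
        rwa [EReal.toReal_coe] at h2
      have hmem : (R (a + b)).toReal + q (u + v - (a + b)) + η (u + v - (a + b)) ∈ A (u + v) :=
        ⟨a + b, habT, rfl⟩
      have hle := hNle _ _ hmem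
      have hsum : u + v - (a + b) = (u - a) + (v - b) := by abel
      have hqle : q (u + v - (a + b)) ≤ q (u - a) + q (v - b) := by
        rw [hsum]; exact hqtri _ _
      have hηeq : η (u + v - (a + b)) = η (u - a) + η (v - b) := by rw [hsum, map_add]
      rw [hxe] at hx
      rw [hye] at hy
      linarith
    have hNsmul_le : ∀ (l : ℝ), 0 < l → ∀ v, N (l • v) ≤ l * N v := by
      intro l hl v
      have h1 : ∀ x ∈ A v, l⁻¹ * N (l • v) ≤ x := by
        rintro x ⟨a, haT, rfl⟩
        have hlaT : R (l • a) ≠ ⊤ := by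
          rw [hRhom a l hl, ← EReal.coe_toReal haT (hRbot a), ← EReal.coe_mul]
          exact EReal.coe_ne_top _
        have hmem : (R (l • a)).toReal + q (l • v - l • a) + η (l • v - l • a) ∈ A (l • v) :=
          ⟨l • a, hlaT, rfl⟩
        have hle := hNle _ _ hmem
        have hR : (R (l • a)).toReal = l * (R a).toReal := by
          rw [hRhom a l hl, EReal.toReal_mul, EReal.toReal_coe]
        have hq2 : q (l • v - l • a) = l * q (v - a) := by
          rw [← smul_sub, hqsmul l _ hl.le]
        have hη2 : η (l • v - l • a) = l * η (v - a) := by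
          rw [← smul_sub, map_smul, smul_eq_mul]
        rw [hR, hq2, hη2] at hle
        have h2 := mul_le_mul_of_nonneg_left hle (inv_nonneg.2 hl.le)
        have h3 : l⁻¹ * (l * (R a).toReal + l * q (v - a) + l * η (v - a))
            = (R a).toReal + q (v - a) + η (v - a) := by
          field_simp
        rw [h3] at h2
        calc l⁻¹ * N (l • v) ≤ _ := h2
          _ = _ := rfl
      have h4 : l⁻¹ * N (l • v) ≤ N v := le_csInf (hAne v) h1
      have h5 := mul_le_mul_of_nonneg_left h4 hl.le
      rwa [← mul_assoc, mul_inv_cancel₀ hl.ne', one_mul] at h5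
    have hNsmul : ∀ (l : ℝ), 0 < l → ∀ v : Z, N (l • v) = l * N v := by
      intro l hl v
      refine le_antisymm (hNsmul_le l hl v) ?_
      have h1 := hNsmul_le l⁻¹ (inv_pos.2 hl) (l • v)
      rw [smul_smul, inv_mul_cancel₀ hl.ne', one_smul] at h1
      have h2 := mul_le_mul_of_nonneg_left h1 hl.le
      rwa [← mul_assoc, mul_inv_cancel₀ hl.ne', one_mul] at h2
    have hN0 : (0 : ℝ) ≤ N 0 := by
      have h := hNlb 0
      rw [map_zero, hqzero] at h
      linarith
    -- Hahn–Banach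
    obtain ⟨g, -, hg⟩ := exists_extension_of_le_sublinear
      (LinearMap.toPMap (0 : Z →ₗ[ℝ] ℝ) ⊥) N (fun l hl v => hNsmul l hl v) hNadd
      (fun x => by
        have hx0 : (x : Z) = 0 := (Submodule.mem_bot ℝ).1 x.2
        rw [show (LinearMap.toPMap (0 : Z →ₗ[ℝ] ℝ) ⊥) x = (0 : Z →ₗ[ℝ] ℝ) x from rfl, LinearMap.zero_apply, hx0]
        exact hN0)
    have hgub : ∀ v, g v ≤ q v + η v := by
      intro v
      have hmem : (R 0).toReal + q (v - 0) + η (v - 0) ∈ A v :=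
        ⟨0, by rw [hR0eq]; exact EReal.zero_ne_top, rfl⟩
      have h := (hg v).trans (hNle v _ hmem)
      rw [hR0eq] at h
      simpa using h
    have hglb : ∀ v, η v - q v ≤ g v := by
      intro v
      have h1 := hgub (-v)
      rw [map_neg, map_neg, hqneg] at h1
      linarith
    have hgR : ∀ v, R v ≠ ⊤ → g v ≤ (R v).toReal := by
      intro v hv
      have hmem : (R v).toReal + q (v - v) + η (v - v) ∈ A v := ⟨v, hv, rfl⟩
      have h := (hg v).trans (hNle v _ hmem)
      rw [sub_self, hqzero, map_zero] at h
      linarith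
    -- build the continuous linear functional w with ⇑w = g
    set D : Z →ₗ[ℝ] ℝ := (η : Z →ₗ[ℝ] ℝ) - g with hD
    have hDv : ∀ v, D v = η v - g v := fun v => rfl
    have hDbound : ∀ v, ‖D v‖ ≤ (c' / τ * ‖ι‖) * ‖v‖ := by
      intro v
      rw [Real.norm_eq_abs, hDv]
      have h1 := hglb v
      have h2 := hgub v
      have h3 : q v ≤ c' / τ * ‖ι‖ * ‖v‖ := by
        rw [hqdef]
        dsimp only
        rw [mul_assoc]
        exact mul_le_mul_of_nonneg_left (ι.le_opNorm v) hct
      rw [abs_le]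
      constructor <;> linarith
    set Dc : Z →L[ℝ] ℝ := LinearMap.mkContinuous D (c' / τ * ‖ι‖) hDbound with hDc
    set w : Z →L[ℝ] ℝ := η - Dc with hwdef
    have hwv : ∀ v, w v = g v := by
      intro v
      rw [hwdef]
      rw [ContinuousLinearMap.sub_apply]
      rw [hDc, LinearMap.mkContinuous_apply, hDv]
      ring
    have hwsub : w ∈ subdiffE R 0 := by
      intro y
      rw [hR0eq, zero_add, sub_zero, hwv y]
      rcases eq_or_ne (R y) ⊤ with h | h
      · rw [h]; exact le_top
      · rw [← EReal.coe_toReal h (hRbot y)]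
        exact_mod_cast hgR y h
    have hηw : ∀ z : Z, (η - w) z = η z - g z := by
      intro z
      rw [ContinuousLinearMap.sub_apply, hwv]
    have hinV : InVdual ι (η - w) := by
      refine ⟨c' / τ, fun z => ?_⟩
      rw [hηw]
      have h1 := hglb z
      have h2 := hgub z
      have hqz : q z = c' / τ * ‖ι z‖ := rfl
      rw [abs_le]
      constructor <;> linarith
    have hρle : VdualNorm ι (η - w) ≤ c' / τ := by
      rw [VdualNorm]
      refine csSup_le ⟨0, 0, by simp, by simp⟩ ?_
      rintro r ⟨z, hz, rfl⟩
      rw [hηw]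
      have h1 := hglb z
      have hqz : q z ≤ c' / τ := by
        calc q z = c' / τ * ‖ι z‖ := rfl
          _ ≤ c' / τ * 1 := mul_le_mul_of_nonneg_left hz hct
          _ = c' / τ := mul_one _
      linarith
    have hmemS : ((VdualNorm ι (η - w) : ℝ) : EReal) ∈ S := ⟨w, hwsub, hinV, rfl⟩
    calc (τ : EReal) * sInf S ≤ (τ : EReal) * ((VdualNorm ι (η - w) : ℝ) : EReal) :=
        hmul τ hτ.le (sInf_le hmemS)
      _ = ((τ * VdualNorm ι (η - w) : ℝ) : EReal) := (EReal.coe_mul _ _).symm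
      _ ≤ ((c' : ℝ) : EReal) := by
          rw [EReal.coe_le_coe_iff]
          calc τ * VdualNorm ι (η - w) ≤ τ * (c' / τ) :=
              mul_le_mul_of_nonneg_left hρle hτ.le
            _ = c' := by field_simp
      _ = c := hcc.symm
  exact le_antisymm heasy hhard
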